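/- Let f be a monic real polynomial of degree m. All real roots of f are real parts of roots of unity (i.e., of the form cos(2πq) with q ∈ ℚ) and f splits over ℝ with all roots in [−1,1], if (2z)^m · f((z+z⁻¹)/2), viewed as a polynomial in z, is a product of cyclotomic polynomials. -/

import Mathlib

open Polynomial

private theorem zhuk_key (m : ℕ) (f : Polynomial ℝ)
    (hcyc : ∃ g : Polynomial ℂ,
      (∃ L : List ℕ, g = (L.map fun j => Polynomial.cyclotomic j ℂ).prod) ∧
      ∀ z : ℂ, z ≠ 0 → (2 * z) ^ m * (Polynomial.aeval ((z + z⁻¹) / 2)) f = g.eval z)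
    (w : ℂ) (hw : Polynomial.aeval w f = 0) :
    ∃ q : ℚ, w = Complex.cos (2 * Real.pi * (q : ℝ)) := by
  obtain ⟨g, ⟨L, rfl⟩, hg⟩ := hcyc
  -- find z with (z + z⁻¹)/2 = w
  have hdeg2 : (X ^ 2 - C (2 * w) * X + 1 : Polynomial ℂ).degree = 2 := by
    compute_degree!
  obtain ⟨z, hz⟩ := Complex.exists_root (f := X ^ 2 - C (2 * w) * X + 1)
    (by rw [hdeg2]; norm_num)
  have hz' : z ^ 2 - 2 * w * z + 1 = 0 := by
    simpa [IsRoot] using hz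
  have hz0 : z ≠ 0 := by
    rintro rfl
    simp at hz'
  have hinv : z⁻¹ = 2 * w - z := by
    have h1 : z * (2 * w - z) = 1 := by linear_combination -hz'
    field_simp
    linear_combination -h1
  have hwz : (z + z⁻¹) / 2 = w := by
    rw [hinv]; ring
  have h0 : ((L.map fun j => Polynomial.cyclotomic j ℂ).prod).eval z = 0 := by
    rw [← hg z hz0, hwz, hw, mul_zero]
  rw [eval_list_prod] at h0
  obtain ⟨j, hjL, hj⟩ : ∃ j ∈ L, (Polynomial.cyclotomic j ℂ).eval z = 0 := by
    have h1 := List.prod_eq_zero_iff.mp h0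
    simpa [List.map_map] using h1
  have hj0 : j ≠ 0 := by
    rintro rfl
    simp [Polynomial.cyclotomic_zero] at hj
  have hprim : IsPrimitiveRoot z j :=
    (Polynomial.isRoot_cyclotomic_iff_charZero (Nat.pos_of_ne_zero hj0)).mp hj
  obtain ⟨i, hi, hcop, hexp⟩ := (Complex.isPrimitiveRoot_iff z j hj0).mp hprim
  refine ⟨(i : ℚ) / (j : ℚ), ?_⟩
  have hq : ((((i : ℚ) / (j : ℚ) : ℚ)) : ℂ) = (i : ℂ) / (j : ℂ) := by push_cast; ring
  have hzexp : z = Complex.exp (2 * Real.pi * Complex.I * ((i : ℂ) / (j : ℂ))) := hexp.symm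
  have hzinv : z⁻¹ = Complex.exp (-(2 * Real.pi * Complex.I * ((i : ℂ) / (j : ℂ)))) := by
    rw [hzexp, ← Complex.exp_neg]
  rw [← hwz, hzinv, hzexp, Complex.cos]
  push_cast
  ring_nf

theorem zhukovskij_roots_real_parts_of_roots_of_unity (m : ℕ) (f : Polynomial ℝ)
    (hmonic : f.Monic) (hdeg : f.natDegree = m)
    (hcyc : ∃ g : Polynomial ℂ,
      (∃ L : List ℕ, g = (L.map fun j => Polynomial.cyclotomic j ℂ).prod) ∧
      ∀ z : ℂ, z ≠ 0 → (2 * z) ^ m * (Polynomial.aeval ((z + z⁻¹) / 2)) f = g.eval z) :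
    (∀ x : ℝ, f.IsRoot x → ∃ q : ℚ, x = Real.cos (2 * Real.pi * q)) ∧
    (f.map (RingHom.id ℝ)).Splits ∧
    ∀ x ∈ f.roots, -1 ≤ x ∧ x ≤ 1 := by
  have key := zhuk_key m f hcyc
  have hroot : ∀ x : ℝ, f.IsRoot x → ∃ q : ℚ, x = Real.cos (2 * Real.pi * q) := by
    intro x hx
    have hx0 : Polynomial.aeval (x : ℂ) f = 0 := by
      rw [show ((x : ℝ) : ℂ) = algebraMap ℝ ℂ x from rfl, aeval_algebraMap_apply]
      simp [show Polynomial.aeval x f = 0 from by simpa using hx.eq_zero]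
    obtain ⟨q, hq⟩ := key _ hx0
    refine ⟨q, ?_⟩
    have hcast : ((x : ℝ) : ℂ) = ((Real.cos (2 * Real.pi * q) : ℝ) : ℂ) := by
      rw [hq, Complex.ofReal_cos]
      push_cast
      ring_nf
    exact_mod_cast hcast
  refine ⟨hroot, ?_, ?_⟩
  · rw [Polynomial.map_id]
    apply Splits.of_splits_map (algebraMap ℝ ℂ) (IsAlgClosed.splits _)
    intro a ha
    rw [RingHom.mem_range]
    have ha0 : Polynomial.aeval a f = 0 := by
      have h := isRoot_of_mem_roots ha
      rwa [IsRoot, eval_map, ← aeval_def] at h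
    obtain ⟨q, hq⟩ := key a ha0
    refine ⟨Real.cos (2 * Real.pi * q), ?_⟩
    rw [hq]
    rw [show (algebraMap ℝ ℂ) (Real.cos (2 * Real.pi * (q : ℝ))) =
      ((Real.cos (2 * Real.pi * (q : ℝ)) : ℝ) : ℂ) from rfl, Complex.ofReal_cos]
    push_cast
    ring_nf
  · intro x hx
    obtain ⟨q, hq⟩ := hroot x (isRoot_of_mem_roots hx)
    rw [hq]
    exact ⟨Real.neg_one_le_cos _, Real.cos_le_one _⟩
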